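/- Skeleton approximation exactness for finite-rank functions: let G(s,t) = Σ_{k=1}^{r} uₖ(s)vₖ(t) and suppose points s₁,…,s_r and t₁,…,t_r are such that the r×r matrix M with M(a,b) = G(sₐ,t_b) is invertible. Then for all (s,t) ∈ [0,1]², G(s,t) = g_row(s) M⁻¹ g_col(t), where g_row(s) = (G(s,t₁),…,G(s,t_r)) and g_col(t) = (G(s₁,t),…,G(s_r,t))ᵀ. -/

import Mathlib

/-- Skeleton approximation exactness for finite-rank functions:
if `G(s,t) = ∑ₖ uₖ(s)vₖ(t)` and the pivot matrix `M(a,b) = G(sₐ,t_b)` is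
invertible, then `G(s,t) = g_row(s) M⁻¹ g_col(t)` for all `(s,t) ∈ [0,1]²`,
where `g_row(s) = (G(s,t₁),…,G(s,t_r))` and `g_col(t) = (G(s₁,t),…,G(s_r,t))ᵀ`. -/
theorem skeleton_finite_rank_exact
    (r : ℕ) (G : ℝ → ℝ → ℝ) (u v : Fin r → ℝ → ℝ)
    (hG : ∀ s t, G s t = ∑ k, u k s * v k t)
    (sp tp : Fin r → ℝ)
    (hsp : ∀ a, sp a ∈ Set.Icc (0:ℝ) 1) (htp : ∀ a, tp a ∈ Set.Icc (0:ℝ) 1)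
    (M : Matrix (Fin r) (Fin r) ℝ) (hM : ∀ a b, M a b = G (sp a) (tp b))
    (hMinv : IsUnit M.det) :
    ∀ s ∈ Set.Icc (0:ℝ) 1, ∀ t ∈ Set.Icc (0:ℝ) 1,
      G s t = ∑ a, ∑ b, G s (tp a) * M⁻¹ a b * G (sp b) t := by
  intro s hs t ht
  set A : Matrix (Fin r) (Fin r) ℝ := fun a k => u k (sp a) with hA
  set B : Matrix (Fin r) (Fin r) ℝ := fun k b => v k (tp b) with hB
  set x : Fin r → ℝ := fun k => u k s with hx
  set y : Fin r → ℝ := fun k => v k t with hy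
  have hMAB : M = A * B := by
    ext a b
    simp [Matrix.mul_apply, hM, hG, hA, hB]
    rfl
  have hdet : IsUnit (A.det * B.det) := by
    rw [← Matrix.det_mul, ← hMAB]; exact hMinv
  have hAdet : IsUnit A.det := isUnit_of_mul_isUnit_left hdet
  have hBdet : IsUnit B.det := isUnit_of_mul_isUnit_right hdet
  have key : B * M⁻¹ * A = 1 := by
    rw [hMAB, Matrix.mul_inv_rev, ← Matrix.mul_assoc,
      Matrix.mul_nonsing_inv B hBdet, Matrix.one_mul,
      Matrix.nonsing_inv_mul A hAdet]
  have expand : ∑ a, ∑ b, G s (tp a) * M⁻¹ a b * G (sp b) t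
      = dotProduct (Matrix.vecMul x B) (Matrix.mulVec M⁻¹ (Matrix.mulVec A y)) := by
    simp only [dotProduct, Matrix.mulVec, Matrix.vecMul, hA, hB, hx, hy,
      Finset.mul_sum]
    refine Finset.sum_congr rfl fun a _ => ?_
    refine Finset.sum_congr rfl fun b _ => ?_
    rw [hG s (tp a), hG (sp b) t, Finset.mul_sum]
    exact Finset.sum_congr rfl fun i _ => by ring
  rw [expand, Matrix.dotProduct_mulVec, Matrix.vecMul_vecMul,
    Matrix.dotProduct_mulVec, Matrix.vecMul_vecMul, key, Matrix.vecMul_one]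
  simp [dotProduct, hx, hy, hG]
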